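/- Let G be a d-regular graph on n vertices with adjacency matrix M and second largest eigenvalue λ₂ satisfying λ₂ ≥ d − n/2 and λ₂ < d. Set α = n/(d − λ₂) and A = (αd − n)I + J − αM. Then A is positive semidefinite, A_{ij} ≤ −1 for every edge (i,j), A_{ij} ≥ 1 for every non-edge pair i ≠ j, all row sums of A are zero, and (1/2)tr A = (n²/2)·λ₂/(d−λ₂) + n/2. -/

import Mathlib

open Matrix

/-- For a `d`-regular graph `G` on `n` vertices with second largest adjacency
eigenvalue `λ₂` satisfying `d - n/2 ≤ λ₂ < d`, the matrix
`A = (αd - n)·I + J - α·M` with `α = n/(d - λ₂)` is a feasible dual solution: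
it is PSD, `Aᵢⱼ ≤ -1` on edges, `Aᵢⱼ ≥ 1` on non-edge pairs, has zero row
sums, and `(1/2) tr A = (n²/2)·λ₂/(d - λ₂) + n/2`. -/
theorem stmt_11 (n d : ℕ) (G : SimpleGraph (Fin n)) [DecidableRel G.Adj]
    (hreg : G.IsRegularOfDegree d)
    (lam2 : ℝ)
    (hlam : ∀ x : Fin n → ℝ, (∑ i, x i) = 0 →
      x ⬝ᵥ (G.adjMatrix ℝ *ᵥ x) ≤ lam2 * (x ⬝ᵥ x))
    (hlow : (d : ℝ) - n / 2 ≤ lam2) (hup : lam2 < d)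
    (α : ℝ) (hα : α = n / (d - lam2))
    (A : Matrix (Fin n) (Fin n) ℝ)
    (hAdef : A = (α * d - n) • (1 : Matrix (Fin n) (Fin n) ℝ) +
      (Matrix.of fun _ _ => (1 : ℝ)) - α • G.adjMatrix ℝ) :
    A.PosSemidef ∧
    (∀ i j, G.Adj i j → A i j ≤ -1) ∧
    (∀ i j, i ≠ j → ¬ G.Adj i j → 1 ≤ A i j) ∧
    (∀ i, ∑ j, A i j = 0) ∧
    A.trace / 2 = ((n : ℝ) ^ 2 / 2) * (lam2 / ((d : ℝ) - lam2)) + (n : ℝ) / 2 := by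
  set M := G.adjMatrix ℝ with hM
  have hd : (0:ℝ) < (d:ℝ) - lam2 := by linarith
  have hdne : ((d:ℝ) - lam2) ≠ 0 := ne_of_gt hd
  have hα0 : 0 ≤ α := by
    rw [hα]; positivity
  have hαd : α * ((d:ℝ) - lam2) = n := by
    rw [hα]; field_simp
  -- entry formula
  have hent : ∀ i j, A i j = (α*(d:ℝ) - n) * (if i = j then (1:ℝ) else 0) + 1
      - α * (if G.Adj i j then (1:ℝ) else 0) := by
    intro i j
    rw [hAdef]
    simp [Matrix.one_apply, SimpleGraph.adjMatrix_apply, M]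
  -- row sums of M
  have hrowM : ∀ i, ∑ j, M i j = (d:ℝ) := by
    intro i
    simp [M, SimpleGraph.adjMatrix_apply, Finset.sum_boole]
    rw [← SimpleGraph.neighborFinset_eq_filter]
    exact hreg i
  have hsymM : ∀ i j, M i j = M j i := by
    intro i j
    simp only [M, SimpleGraph.adjMatrix_apply]
    by_cases h : G.Adj i j
    · rw [if_pos h, if_pos h.symm]
    · rw [if_neg h, if_neg (fun hh => h hh.symm)]
  have hcolM : ∀ j, ∑ i, M i j = (d:ℝ) := by
    intro j
    rw [Finset.sum_congr rfl (fun i _ => hsymM i j)]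
    exact hrowM j
  -- symmetry of A
  have hsymA : ∀ i j, A i j = A j i := by
    intro i j
    rw [hent, hent]
    have e1 : (i = j) ↔ (j = i) := eq_comm
    have e2 : G.Adj i j ↔ G.Adj j i := G.adj_comm i j
    rw [if_congr e1 rfl rfl, if_congr e2 rfl rfl]
  -- row sums of A
  have hrowA : ∀ i, ∑ j, A i j = 0 := by
    intro i
    rw [Finset.sum_congr rfl fun j _ => hent i j]
    rw [Finset.sum_sub_distrib, Finset.sum_add_distrib]
    have h1 : ∑ j, ((α*(d:ℝ) - n) * if i = j then (1:ℝ) else 0) = α*(d:ℝ) - n := by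
      simp
    have h2 : ∑ j, (α * if G.Adj i j then (1:ℝ) else 0) = α * (d:ℝ) := by
      rw [← Finset.mul_sum]
      have h3 : ∑ j, (if G.Adj i j then (1:ℝ) else 0) = (d:ℝ) := by
        have := hrowM i
        simpa only [M, SimpleGraph.adjMatrix_apply] using this
      rw [h3]
    rw [h1, h2]
    simp only [Finset.sum_const, Finset.card_univ, Fintype.card_fin, nsmul_eq_mul, mul_one]
    ring
  -- quadratic form expansion
  have hJ : ∀ x : Fin n → ℝ, ((Matrix.of fun _ _ => (1:ℝ)) : Matrix (Fin n) (Fin n) ℝ) *ᵥ x = fun _ => ∑ j, x j := by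
    intro x; funext i; simp [Matrix.mulVec, dotProduct]
  have hq : ∀ x : Fin n → ℝ, x ⬝ᵥ (A *ᵥ x)
      = (α*(d:ℝ) - n) * (x ⬝ᵥ x) + (∑ i, x i)^2 - α * (x ⬝ᵥ (M *ᵥ x)) := by
    intro x
    rw [hAdef, Matrix.sub_mulVec, Matrix.add_mulVec, Matrix.smul_mulVec,
      Matrix.one_mulVec, Matrix.smul_mulVec, hJ x, dotProduct_sub, dotProduct_add,
      dotProduct_smul, dotProduct_smul]
    have hxc : x ⬝ᵥ (fun _ => ∑ j, x j) = (∑ j, x j)^2 := by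
      simp [dotProduct, ← Finset.sum_mul]
      ring
    rw [hxc]
    simp [smul_eq_mul, M]
  -- PSD
  have hpsd : A.PosSemidef := by
    rw [Matrix.posSemidef_iff_dotProduct_mulVec]
    constructor
    · ext i j
      simp [Matrix.conjTranspose_apply]
      exact hsymA j i
    · intro x
      have hstar : star x = x := by funext i; simp
      rw [hstar, hq x]
      rcases Nat.eq_zero_or_pos n with hn | hn
      · subst hn
        simp [dotProduct]
      · have hnR : (0:ℝ) < n := by exact_mod_cast hn
        set s := ∑ i, x i with hs
        set c := s / n with hc
        set y : Fin n → ℝ := fun i => x i - c with hy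
        have hsc : (n:ℝ) * c = s := by
          rw [hc]; field_simp
        have hysum : ∑ i, y i = 0 := by
          simp [hy, Finset.sum_sub_distrib, ← hs]
          rw [mul_comm] at hsc
          linarith [hsc]
        have hxy : x = y + (fun _ => c) := by
          funext i; simp [hy]
        -- M *ᵥ const
        have hMvc : M *ᵥ (fun _ => c) = fun _ => (d:ℝ) * c := by
          funext i
          simp [Matrix.mulVec, dotProduct, ← Finset.sum_mul, hrowM i]
        have hconst_dot : ∀ v : Fin n → ℝ, (fun _ => c) ⬝ᵥ v = c * ∑ i, v i := by
          intro v; simp [dotProduct, Finset.mul_sum]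
        have hdot_const : ∀ (v : Fin n → ℝ) (r : ℝ), v ⬝ᵥ (fun _ => r) = r * ∑ i, v i := by
          intro v r; simp [dotProduct, ← Finset.sum_mul]; ring
        -- expand x ⬝ M x
        have hxMx : x ⬝ᵥ (M *ᵥ x) = y ⬝ᵥ (M *ᵥ y) + (d:ℝ) * n * c^2 := by
          rw [hxy]
          rw [Matrix.mulVec_add, hMvc, add_dotProduct, dotProduct_add, dotProduct_add]
          have t1 : y ⬝ᵥ (fun _ => (d:ℝ)*c) = 0 := by
            rw [hdot_const, hysum]; ring
          have t2 : (fun _ => c) ⬝ᵥ (M *ᵥ y) = 0 := by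
            rw [hconst_dot]
            have : ∑ i, (M *ᵥ y) i = (d:ℝ) * ∑ j, y j := by
              simp only [Matrix.mulVec, dotProduct]
              rw [Finset.sum_comm]
              rw [Finset.mul_sum]
              refine Finset.sum_congr rfl fun j _ => ?_
              rw [← Finset.sum_mul, hcolM j]
            rw [this, hysum]; ring
          have t3 : (fun _ : Fin n => c) ⬝ᵥ (fun _ => (d:ℝ)*c) = (d:ℝ) * n * c^2 := by
            simp only [dotProduct, Finset.sum_const, Finset.card_univ, Fintype.card_fin,
              nsmul_eq_mul]
            ring
          rw [t1, t2, t3]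
          ring
        have hxx : x ⬝ᵥ x = y ⬝ᵥ y + (n:ℝ) * c^2 := by
          rw [hxy, add_dotProduct, dotProduct_add, dotProduct_add]
          have t1 : y ⬝ᵥ (fun _ => c) = 0 := by rw [hdot_const, hysum]; ring
          have t2 : (fun _ => c) ⬝ᵥ y = 0 := by rw [hconst_dot, hysum]; ring
          have t3 : (fun _ : Fin n => c) ⬝ᵥ (fun _ => c) = (n:ℝ) * c^2 := by
            simp only [dotProduct, Finset.sum_const, Finset.card_univ, Fintype.card_fin,
              nsmul_eq_mul]
            ring
          rw [t1, t2, t3]; ring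
        have hylam := hlam y hysum
        have hyy : 0 ≤ y ⬝ᵥ y := by
          simp only [dotProduct]
          exact Finset.sum_nonneg fun i _ => mul_self_nonneg _
        have key : 0 ≤ (α*(d:ℝ) - n) * (y ⬝ᵥ y) - α * (y ⬝ᵥ (M *ᵥ y)) := by
          have h1 : α*(d:ℝ) - n = α * lam2 := by
            rw [← hαd]; ring
          rw [h1]
          have h2 : α * lam2 * (y ⬝ᵥ y) - α * (y ⬝ᵥ (M *ᵥ y))
              = α * (lam2 * (y ⬝ᵥ y) - y ⬝ᵥ (M *ᵥ y)) := by ring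
          rw [h2]
          exact mul_nonneg hα0 (by linarith)
        have hseq : s = (n:ℝ) * c := hsc.symm
        rw [hxx, hxMx, hseq]
        nlinarith [key]
  refine ⟨hpsd, ?_, ?_, hrowA, ?_⟩
  · intro i j hadj
    have hne : i ≠ j := G.ne_of_adj hadj
    rw [hent, if_neg hne, if_pos hadj]
    have h2α : 2 ≤ α := by
      rw [hα, le_div_iff₀ hd]
      have : (0:ℝ) < n := by
        exact_mod_cast i.pos
      linarith
    linarith
  · intro i j hne hnadj
    rw [hent, if_neg hne, if_neg hnadj]
    linarith
  · have htr : A.trace = (n:ℝ) * (α*(d:ℝ) - n + 1) := by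
      have : A.trace = ∑ i, A i i := rfl
      rw [this]
      have : ∀ i : Fin n, A i i = α*(d:ℝ) - n + 1 := by
        intro i
        rw [hent, if_pos rfl, if_neg (G.irrefl)]
        ring
      rw [Finset.sum_congr rfl fun i _ => this i]
      simp [Finset.sum_const]
      ring
    rw [htr, hα]
    field_simp
    ring
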